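/- arXiv:1902.10129 — 4 statements merged into one kernel-verified Lean document; each statement's English description precedes it below -/
import Mathlib

section
/- Let μ ∈ ℂ with |μ| > 1 and write μ = -e^{ix} for some x ∈ ℂ. Then the series ∑_{n=2}^∞ |e^{-ix} U_{n-1}(cos x) - U_{n-2}(cos x)|² equals ∑_{n=2}^∞ |μ|^{-2n} and is finite. Conversely if |μ| ≤ 1 the series diverges. -/
open Complex

/-- Chebyshev polynomials of the second kind (as complex functions). -/
noncomputable def chebU : ℕ → ℂ → ℂ
  | 0, _ => 1
  | 1, x => 2 * x
  | (n + 2), x => 2 * x * chebU (n + 1) x - chebU n x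

lemma key (x : ℂ) : ∀ n : ℕ,
    Complex.exp (-I * x) * chebU (n + 1) (Complex.cos x) - chebU n (Complex.cos x)
      = (Complex.exp (I * x))⁻¹ ^ (n + 2) := by
  have hL : Complex.exp (I * x) ≠ 0 := Complex.exp_ne_zero _
  have hinv : Complex.exp (-I * x) = (Complex.exp (I * x))⁻¹ := by
    rw [← Complex.exp_neg]; ring_nf
  have hcos : Complex.cos x = (Complex.exp (I * x) + (Complex.exp (I * x))⁻¹) / 2 := by
    rw [Complex.cos]; rw [← Complex.exp_neg]; ring_nf
  set l := Complex.exp (I * x) with hl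
  have hmul : l * l⁻¹ = 1 := mul_inv_cancel₀ hL
  intro n
  induction n using Nat.twoStepInduction with
  | zero => simp only [chebU, hinv, hcos]; field_simp; linear_combination -(l*l⁻¹+1) * hmul
  | one =>
    simp only [chebU, hinv, hcos]
    field_simp
    linear_combination (l^2*l⁻¹^2*(l*l⁻¹+1) - l^2 + l*l⁻¹ + 1 + l^2 - ((l*l⁻¹)^3 + 2*(l*l⁻¹)^2 + 2*(l*l⁻¹) + 2)) * hmul
  | more n ih1 ih2 =>
    simp only [chebU] at *
    rw [hinv, hcos] at ih1 ih2 ⊢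
    linear_combination (l + l⁻¹) * ih2 - ih1 + l⁻¹ ^ (n + 2) * hmul

/-- The series `∑_{n=2}^∞ |e^{-ix} U_{n-1}(cos x) - U_{n-2}(cos x)|²` equals
`∑_{n=2}^∞ |μ|^{-2n}` and converges iff `|μ| > 1`, where `μ = -e^{ix}`. -/
theorem cheb_series_summable_iff (μ x : ℂ) (hμx : μ = -Complex.exp (I * x)) :
    (∑' n : ℕ, ‖Complex.exp (-I * x) * chebU (n + 1) (Complex.cos x)
        - chebU n (Complex.cos x)‖ ^ 2)
      = (∑' n : ℕ, ‖μ‖ ^ (-(2 * ((n : ℤ) + 2)))) ∧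
    ((1 < ‖μ‖ → Summable (fun n : ℕ =>
        ‖Complex.exp (-I * x) * chebU (n + 1) (Complex.cos x)
          - chebU n (Complex.cos x)‖ ^ 2)) ∧
     (‖μ‖ ≤ 1 → ¬ Summable (fun n : ℕ =>
        ‖Complex.exp (-I * x) * chebU (n + 1) (Complex.cos x)
          - chebU n (Complex.cos x)‖ ^ 2))) := by
  have hμ0 : 0 < ‖μ‖ := by
    rw [hμx, norm_neg, norm_pos_iff]; exact Complex.exp_ne_zero _
  have hterm : ∀ n : ℕ,
      ‖Complex.exp (-I * x) * chebU (n + 1) (Complex.cos x)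
        - chebU n (Complex.cos x)‖ ^ 2 = (‖μ‖⁻¹) ^ (2 * (n + 2)) := by
    intro n
    rw [key x n, norm_pow, norm_inv, hμx, norm_neg, ← pow_mul, mul_comm (n+2) 2]
  have hterm' : ∀ n : ℕ,
      (‖μ‖⁻¹) ^ (2 * (n + 2)) = ‖μ‖ ^ (-(2 * ((n : ℤ) + 2))) := by
    intro n
    rw [show (-(2 * ((n : ℤ) + 2))) = -((2 * (n + 2) : ℕ) : ℤ) by push_cast; ring,
      zpow_neg, zpow_natCast, inv_pow]
  refine ⟨tsum_congr fun n => by rw [hterm n, hterm' n], ?_, ?_⟩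
  · intro h1
    have hc : (‖μ‖⁻¹) ^ 2 < 1 := by
      have : ‖μ‖⁻¹ < 1 := inv_lt_one_of_one_lt₀ h1
      nlinarith [norm_nonneg μ, inv_nonneg.mpr (norm_nonneg μ)]
    have hs : Summable fun n : ℕ => ((‖μ‖⁻¹) ^ 2) ^ n :=
      summable_geometric_of_lt_one (by positivity) hc
    have := (hs.mul_left (((‖μ‖⁻¹) ^ 2) ^ 2))
    refine this.congr fun n => ?_
    rw [hterm n, ← pow_add, ← pow_mul]
    ring_nf
  · intro h1 hs
    have h0 := hs.tendsto_atTop_zero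
    have hev : ∀ n : ℕ, (1 : ℝ) ≤ ‖Complex.exp (-I * x) * chebU (n + 1) (Complex.cos x)
          - chebU n (Complex.cos x)‖ ^ 2 := by
      intro n
      rw [hterm n]
      exact one_le_pow₀ ((one_le_inv₀ hμ0).mpr h1)
    have := ge_of_tendsto h0 (Filter.Eventually.of_forall hev)
    linarith
end

section
/- Let μ ∈ ℝ with |μ| ≤ 1, μ ≠ 0. Then the operator J₁*(μ) on ℓ²(ℕ) (diagonal (-μ,0,0,…), off-diagonals 1) has no eigenvalue outside [-2,2]: if z₀ ∉ [-2,2] and J₁*(μ)u = z₀ u with u ∈ ℓ²(ℕ), then u = 0. -/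
theorem no_eigenvalue_outside (μ : ℝ) (hμ : |μ| ≤ 1) (hμ0 : μ ≠ 0)
    (z₀ : ℝ) (hz : z₀ ∉ Set.Icc (-2 : ℝ) 2) (u : ℕ → ℝ) (hu : Memℓp u 2)
    (h0 : -μ * u 0 + u 1 = z₀ * u 0)
    (hrec : ∀ n : ℕ, u n + u (n + 2) = z₀ * u (n + 1)) :
    u = 0 := by
  -- |z₀| > 2
  have hz2 : 2 < |z₀| := by
    simp only [Set.mem_Icc, not_and_or, not_le] at hz
    rcases hz with h | h
    · rw [abs_of_neg (by linarith)]; linarith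
    · rw [abs_of_pos (by linarith)]; linarith
  have hsq : Real.sqrt (z₀ ^ 2 - 4) ^ 2 = z₀ ^ 2 - 4 := by
    rw [Real.sq_sqrt]; nlinarith [sq_abs z₀]
  have hsnn : 0 ≤ Real.sqrt (z₀ ^ 2 - 4) := Real.sqrt_nonneg _
  -- choose the root v with |v| > 1
  obtain ⟨v, hvroot, hv1⟩ : ∃ v : ℝ, v ^ 2 - z₀ * v + 1 = 0 ∧ 1 < |v| := by
    rcases lt_or_ge 0 z₀ with h | h
    · refine ⟨(z₀ + Real.sqrt (z₀ ^ 2 - 4)) / 2, by nlinarith, ?_⟩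
      rw [abs_of_pos h] at hz2
      rw [abs_of_pos (by linarith)]; linarith
    · refine ⟨(z₀ - Real.sqrt (z₀ ^ 2 - 4)) / 2, by nlinarith, ?_⟩
      rw [abs_of_nonpos h] at hz2
      rw [abs_of_neg (by linarith)]; linarith
  have hv0 : v ≠ 0 := by intro h; rw [h] at hv1; norm_num at hv1
  set w : ℝ := v⁻¹ with hw
  have hvw : v * w = 1 := mul_inv_cancel₀ hv0
  have hsum : w + v = z₀ := by
    apply mul_left_cancel₀ hv0
    nlinarith [hvroot]
  -- u tends to 0
  have hu0 : Filter.Tendsto u Filter.atTop (nhds 0) := by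
    have hs : Summable fun n => ‖u n‖ ^ (2 : ENNReal).toReal := hu.summable (by norm_num)
    simp only [ENNReal.toReal_ofNat, Real.norm_eq_abs] at hs
    have hs2 : Summable fun n => |u n| ^ (2 : ℕ) := by
      convert hs using 2 with n
      rw [← Real.rpow_natCast]; norm_num
    have h1 := hs2.tendsto_atTop_zero
    have h2 : Filter.Tendsto (fun n => Real.sqrt (|u n| ^ 2)) Filter.atTop (nhds 0) := by
      have := (Real.continuous_sqrt.tendsto 0).comp h1
      rw [Real.sqrt_zero] at this; exact this
    have h3 : Filter.Tendsto (fun n => |u n|) Filter.atTop (nhds 0) := by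
      convert h2 using 2 with n
      rw [Real.sqrt_sq (abs_nonneg _)]
    exact (tendsto_zero_iff_abs_tendsto_zero u).mpr h3
  -- the auxiliary sequence
  set a : ℕ → ℝ := fun n => u (n + 1) - w * u n with ha
  have hageom : ∀ n, a n = a 0 * v ^ n := by
    intro n
    induction n with
    | zero => simp
    | succ n ih =>
      have hr := hrec n
      have : a (n + 1) = v * a n := by
        simp only [ha]
        have : u (n + 2) = z₀ * u (n + 1) - u n := by linarith
        rw [this, ← hsum]
        have : v * (w * u n) = u n := by rw [← mul_assoc, hvw, one_mul]
        ring_nf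
        nlinarith [hvw]
      rw [this, ih, pow_succ]; ring
  -- a tends to 0
  have hatend : Filter.Tendsto a Filter.atTop (nhds 0) := by
    have h1 : Filter.Tendsto (fun n => u (n + 1)) Filter.atTop (nhds 0) :=
      hu0.comp (Filter.tendsto_add_atTop_nat 1)
    have h2 := h1.sub (hu0.const_mul w)
    simpa using h2
  -- a 0 = 0
  have ha0 : a 0 = 0 := by
    have hb : ∀ n, |a 0| ≤ |a n| := by
      intro n
      rw [hageom n, abs_mul, abs_pow]
      calc |a 0| = |a 0| * 1 := (mul_one _).symm
        _ ≤ |a 0| * |v| ^ n :=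
          mul_le_mul_of_nonneg_left (one_le_pow₀ hv1.le) (abs_nonneg _)
    have := ge_of_tendsto' (hatend.abs) hb
    simp only [abs_zero] at this
    exact abs_eq_zero.mp (le_antisymm this (abs_nonneg _))
  -- u 1 = w * u 0
  have h1 : u 1 = w * u 0 := by
    have := ha0; simp only [ha] at this; linarith
  -- u 0 = 0
  have hu00 : u 0 = 0 := by
    by_contra h
    have : w - z₀ = -v := by linarith [hsum]
    have hμv : μ = -v := by
      have : (z₀ + μ) * u 0 = w * u 0 := by rw [← h1]; linarith
      have hwz : z₀ + μ = w := by
        exact mul_right_cancel₀ h this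
      linarith
    rw [hμv, abs_neg] at hμ
    linarith
  have hu1 : u 1 = 0 := by rw [h1, hu00, mul_zero]
  -- conclude by strong induction
  funext n
  show u n = 0
  induction n using Nat.strong_induction_on with
  | _ n ih =>
    match n with
    | 0 => exact hu00
    | 1 => exact hu1
    | (m + 2) =>
      have h1 := ih m (by omega)
      have h2 := ih (m + 1) (by omega)
      have := hrec m
      rw [h1, h2] at this
      linarith
end

section
/- The set B₁ = { -sin((n+1)t)/sin(nt) : t = (p/q)π with p, q, n ∈ ℕ, 0 < p < q, sin(nt) ≠ 0 } is dense in ℝ. -/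
/-- The set `B₁` of numbers `-sin((n+1)t)/sin(nt)` for `t = (p/q)π` a rational
multiple of `π` in `(0,π)` and `n ≥ 1` with `sin(nt) ≠ 0`. -/
def B1 : Set ℝ :=
  {r : ℝ | ∃ p q n : ℕ, 0 < p ∧ p < q ∧ 1 ≤ n ∧
    Real.sin (n * ((p / q) * Real.pi)) ≠ 0 ∧
    r = -Real.sin ((n + 1) * ((p / q) * Real.pi)) /
        Real.sin (n * ((p / q) * Real.pi))}

open Real Filter Topology

lemma sin_mul_div_tendsto (d : ℝ) :
    Tendsto (fun u : ℝ => Real.sin (d*u) / u) (𝓝[≠] (0:ℝ)) (𝓝 d) := by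
  have h : HasDerivAt (fun u : ℝ => Real.sin (d*u)) (Real.cos (d*0) * d) 0 :=
    (Real.hasDerivAt_sin (d*0)).comp 0 (by simpa using (hasDerivAt_id (0:ℝ)).const_mul d)
  rw [hasDerivAt_iff_tendsto_slope] at h
  simp only [mul_zero, Real.cos_zero, one_mul] at h
  refine h.congr' ?_
  filter_upwards [self_mem_nhdsWithin] with u hu
  simp [slope_def_field, hu]

lemma sin_ratio_tendsto (c b : ℝ) (hb : b ≠ 0) :
    Tendsto (fun u : ℝ => Real.sin (c*u) / Real.sin (b*u)) (𝓝[≠] (0:ℝ)) (𝓝 (c/b)) := by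
  have := (sin_mul_div_tendsto c).div (sin_mul_div_tendsto b) hb
  refine this.congr' ?_
  filter_upwards [self_mem_nhdsWithin] with u hu
  have hu' : u ≠ 0 := hu
  simp only [Pi.div_apply]
  rw [div_div_div_cancel_right₀ hu']

lemma sin_pi_add' (x : ℝ) : Real.sin (Real.pi + x) = -Real.sin x := by
  rw [Real.sin_add]; simp

lemma closure_aux (c : ℤ) (b : ℕ) (q : ℕ → ℕ)
    (hq : ∀ᶠ M in atTop, M - b ≤ q M)
    (hmem : ∀ᶠ M in atTop,
      Real.sin ((c:ℝ) * (π/(q M:ℝ))) / Real.sin ((b:ℝ) * (π/(q M:ℝ))) ∈ B1)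
    (hb : 1 ≤ b) :
    ((c:ℝ)/(b:ℝ)) ∈ closure B1 := by
  have hqtop : Tendsto (fun M => (q M : ℝ)) atTop atTop := by
    refine tendsto_natCast_atTop_atTop.comp ?_
    exact tendsto_atTop_mono' atTop hq (tendsto_sub_atTop_nat b)
  have hu : Tendsto (fun M => π/(q M : ℝ)) atTop (𝓝[≠] (0:ℝ)) := by
    rw [tendsto_nhdsWithin_iff]
    constructor
    · exact Tendsto.div_atTop tendsto_const_nhds hqtop
    · filter_upwards [hqtop.eventually_gt_atTop 0] with M hM
      have : 0 < π / (q M : ℝ) := div_pos Real.pi_pos hM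
      exact fun hx => absurd hx (by simpa using this.ne')
  have hb' : (b:ℝ) ≠ 0 := by positivity
  exact mem_closure_of_tendsto ((sin_ratio_tendsto (c:ℝ) (b:ℝ) hb').comp hu) hmem

lemma mem_closure_rat (c : ℤ) (b : ℕ) (hb : 1 ≤ b) (hc : c ≠ -(b:ℤ)) :
    ((c:ℝ)/(b:ℝ)) ∈ closure B1 := by
  rcases lt_trichotomy (c + (b:ℤ)) 0 with h | h | h
  · -- c + b < 0 : take a := -(c+b), q M := a*M - b
    set a : ℕ := (-(c + b)).toNat with ha
    have haz : (a:ℤ) = -(c+b) := Int.toNat_of_nonneg (by omega)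
    have ha1 : 1 ≤ a := by omega
    refine closure_aux c b (fun M => a*M - b) ?_ ?_ hb
    · filter_upwards [] with M
      have : M ≤ a*M := Nat.le_mul_of_pos_left M (by omega)
      omega
    · filter_upwards [eventually_ge_atTop (2*b+2)] with M hM
      set Q : ℕ := a*M - b with hQdef
      have h1 : a*(2*b+2) ≤ a*M := Nat.mul_le_mul_left a hM
      have h2 : a*(2*b+2) = a*b + a*b + a + a := by ring
      have h3 : b ≤ a*b := Nat.le_mul_of_pos_left b (by omega)
      have hQb : Q + b = a*M := by omega
      have haQ : a + b < Q := by omega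
      have hQ0 : 0 < Q := by omega
      have hQR : (0:ℝ) < Q := by exact_mod_cast hQ0
      have hQne : (Q:ℝ) ≠ 0 := hQR.ne'
      have e0 : (Q:ℝ) + b = (a:ℝ)*M := by exact_mod_cast hQb
      have hazR : (a:ℝ) = -((c:ℝ)+b) := by exact_mod_cast haz
      have hM1 : 1 ≤ M := by omega
      refine ⟨a, Q, M, by omega, by omega, hM1, ?_, ?_⟩
      · have e1 : (M:ℝ) * (((a:ℝ)/(Q:ℝ)) * π) = π + (b:ℝ)*(π/(Q:ℝ)) := by
          field_simp
          linear_combination (-1) * e0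
        rw [e1, sin_pi_add']
        have hbQ : (b:ℝ) < Q := by exact_mod_cast (by omega : b < Q)
        have hlt : (b:ℝ)*(π/(Q:ℝ)) < π := by
          rw [mul_div_assoc']
          exact (div_lt_iff₀ hQR).mpr (by nlinarith [Real.pi_pos])
        have hpos : 0 < (b:ℝ)*(π/(Q:ℝ)) := by positivity
        simpa using (Real.sin_pos_of_pos_of_lt_pi hpos hlt).ne'
      · have e1 : (M:ℝ) * (((a:ℝ)/(Q:ℝ)) * π) = π + (b:ℝ)*(π/(Q:ℝ)) := by
          field_simp
          linear_combination (-1) * e0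
        have e2 : ((M:ℝ)+1) * (((a:ℝ)/(Q:ℝ)) * π) = π - (c:ℝ)*(π/(Q:ℝ)) := by
          field_simp
          linear_combination (-1) * e0 + 1 * hazR
        rw [e1, e2, sin_pi_add', Real.sin_pi_sub, neg_div_neg_eq]
  · exact absurd (by omega : c = -(b:ℤ)) hc
  · -- c + b > 0 : take a := c+b, q M := a*M + b
    set a : ℕ := (c + b).toNat with ha
    have haz : (a:ℤ) = c+b := Int.toNat_of_nonneg (by omega)
    have ha1 : 1 ≤ a := by omega
    refine closure_aux c b (fun M => a*M + b) ?_ ?_ hb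
    · filter_upwards [] with M
      have : M ≤ a*M := Nat.le_mul_of_pos_left M (by omega)
      omega
    · filter_upwards [eventually_ge_atTop 1] with M hM1
      set Q : ℕ := a*M + b with hQdef
      have hMa : a*1 ≤ a*M := Nat.mul_le_mul_left a hM1
      have hQ0 : 0 < Q := by omega
      have hQR : (0:ℝ) < Q := by exact_mod_cast hQ0
      have hQne : (Q:ℝ) ≠ 0 := hQR.ne'
      have e0 : (Q:ℝ) = (a:ℝ)*M + b := by
        have : Q = a*M + b := hQdef
        exact_mod_cast congrArg (Nat.cast : ℕ → ℝ) this
      have hazR : (a:ℝ) = (c:ℝ)+b := by exact_mod_cast haz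
      refine ⟨a, Q, M, by omega, by omega, hM1, ?_, ?_⟩
      · have e1 : (M:ℝ) * (((a:ℝ)/(Q:ℝ)) * π) = π - (b:ℝ)*(π/(Q:ℝ)) := by
          field_simp
          linear_combination (-1) * e0
        rw [e1, Real.sin_pi_sub]
        have hbQ : (b:ℝ) < Q := by exact_mod_cast (by omega : b < Q)
        have hlt : (b:ℝ)*(π/(Q:ℝ)) < π := by
          rw [mul_div_assoc']
          exact (div_lt_iff₀ hQR).mpr (by nlinarith [Real.pi_pos])
        have hpos : 0 < (b:ℝ)*(π/(Q:ℝ)) := by positivity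
        exact (Real.sin_pos_of_pos_of_lt_pi hpos hlt).ne'
      · have e1 : (M:ℝ) * (((a:ℝ)/(Q:ℝ)) * π) = π - (b:ℝ)*(π/(Q:ℝ)) := by
          field_simp
          linear_combination (-1) * e0
        have e2 : ((M:ℝ)+1) * (((a:ℝ)/(Q:ℝ)) * π) = π + (c:ℝ)*(π/(Q:ℝ)) := by
          field_simp
          linear_combination (-1) * e0 + 1 * hazR
        rw [e1, e2, sin_pi_add', Real.sin_pi_sub, neg_neg]

theorem B1_dense : Dense B1 := by
  rw [← dense_closure]
  have hd : Dense ((Set.range ((↑) : ℚ → ℝ)) \ {(-1:ℝ)}) :=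
    Rat.denseRange_cast.diff_singleton _
  refine hd.mono ?_
  rintro x ⟨⟨r, rfl⟩, hr⟩
  have hr1 : r ≠ -1 := by
    intro h; apply hr; simp [h]
  have hnum : r.num ≠ -(r.den:ℤ) := by
    intro h
    apply hr1
    have hden : ((r.den:ℚ)) ≠ 0 := by exact_mod_cast r.den_pos.ne'
    rw [← Rat.num_div_den r, h]
    field_simp
    simp
  have : ((r:ℝ)) = ((r.num:ℝ))/((r.den:ℝ)) := by rw [Rat.cast_def]
  rw [this]
  exact mem_closure_rat r.num r.den r.pos hnum
end

section
/- Let μ > 1 and let x_n* denote the zero of P_{n,μ} closest to -μ/2 - 1/μ (which exists and is unique for large n). Then |x_n* + μ/2 + 1/μ|^{1/n} → μ^{-2} as n → ∞. -/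
open Filter Topology Set

/-- The monic orthogonal polynomials `P_{n,μ}`: `P_0 = 1`, `P_1(z) = z + μ/2`,
`P_{n+1}(z) = (z - μ/2)P_n(z) - P_{n-1}(z)`. -/
noncomputable def Ppoly (μ : ℝ) : ℕ → ℝ → ℝ
  | 0, _ => 1
  | 1, z => z + μ / 2
  | (n + 2), z => (z - μ / 2) * Ppoly μ (n + 1) z - Ppoly μ n z

noncomputable def Gf (μ : ℝ) (n : ℕ) (t : ℝ) : ℝ := (μ - t) * t ^ (2 * n + 1) + 1 - μ * t

noncomputable def G1 (μ : ℝ) (n : ℕ) (t : ℝ) : ℝ :=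
  (2 * n + 1) * (μ - t) * t ^ (2 * n) - t ^ (2 * n + 1) - μ

lemma key_s19 (μ t : ℝ) (ht : t ≠ 0) (ht1 : t ^ 2 - 1 ≠ 0) : ∀ n : ℕ,
    Ppoly μ n (μ / 2 - t - 1 / t) * (t ^ n * (t ^ 2 - 1)) = (-1) ^ (n + 1) * Gf μ n t := by
  intro n
  induction n using Nat.twoStepInduction with
  | zero => simp [Ppoly, Gf]; ring
  | one => simp only [Ppoly, Gf]; field_simp; ring
  | more n ih0 ih1 =>
    have hz : μ / 2 - t - 1 / t - μ / 2 = -(t ^ 2 + 1) / t := by field_simp; ring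
    have e : Ppoly μ (n + 2) (μ / 2 - t - 1 / t) * (t ^ (n + 2) * (t ^ 2 - 1)) =
        -(t ^ 2 + 1) * (Ppoly μ (n + 1) (μ / 2 - t - 1 / t) * (t ^ (n + 1) * (t ^ 2 - 1)))
          - t ^ 2 * (Ppoly μ n (μ / 2 - t - 1 / t) * (t ^ n * (t ^ 2 - 1))) := by
      show ((μ / 2 - t - 1 / t - μ / 2) * Ppoly μ (n + 1) _ - Ppoly μ n _) * _ = _
      rw [hz]; field_simp; ring
    rw [e, ih1, ih0]
    simp only [Gf, pow_add, pow_mul, pow_succ]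
    ring

lemma Gf_cont (μ : ℝ) (n : ℕ) : Continuous (Gf μ n) := by
  unfold Gf; continuity

lemma hasDerivAt_Gf (μ : ℝ) (n : ℕ) (t : ℝ) : HasDerivAt (Gf μ n) (G1 μ n t) t := by
  have h1 : HasDerivAt (fun s : ℝ => μ - s) (-1) t := (hasDerivAt_id t).const_sub μ
  have h2 : HasDerivAt (fun s : ℝ => s ^ (2 * n + 1)) ((2 * n + 1 : ℕ) * t ^ (2 * n)) t := by
    simpa using hasDerivAt_pow (2 * n + 1) t
  have h3 : HasDerivAt (fun s : ℝ => μ * s) μ t := by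
    simpa using (hasDerivAt_id t).const_mul μ
  have h := ((h1.mul h2).add_const 1).sub h3
  unfold Gf G1
  refine h.congr_deriv ?_
  push_cast; ring

lemma hasDerivAt_G1 (μ : ℝ) (m : ℕ) (t : ℝ) :
    HasDerivAt (G1 μ (m + 1)) (2 * (2 * m + 3) * t ^ (2 * m + 1) * ((m + 1) * μ - (m + 2) * t)) t := by
  have h1 : HasDerivAt (fun s : ℝ => μ - s) (-1) t := (hasDerivAt_id t).const_sub μ
  have h2 : HasDerivAt (fun s : ℝ => s ^ (2 * m + 2)) ((2 * m + 2 : ℕ) * t ^ (2 * m + 1)) t := by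
    simpa using hasDerivAt_pow (2 * m + 2) t
  have h4 : HasDerivAt (fun s : ℝ => s ^ (2 * m + 3)) ((2 * m + 3 : ℕ) * t ^ (2 * m + 2)) t := by
    simpa using hasDerivAt_pow (2 * m + 3) t
  have h := (((h1.mul h2).const_mul ((2 * (m + 1) + 1 : ℕ) : ℝ)).sub h4).sub_const μ
  unfold G1
  rw [show 2 * (m + 1) = 2 * m + 2 from rfl] at *
  refine (h.congr_deriv ?_).congr_of_eventuallyEq (Filter.Eventually.of_forall fun x => ?_)
  · push_cast; ring
  · simp only [Pi.sub_apply, Pi.mul_apply]; push_cast; ring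

lemma Gpos (μ : ℝ) (hμ : 1 < μ) (n : ℕ) (s t : ℝ) (h1 : 1 < t) (hts : t ≤ s)
    (hc : μ + 1 < (2 * n + 1 : ℝ) * (μ - s)) : 0 < Gf μ n t := by
  have hn0 : (0:ℝ) < 2 * n + 1 := by positivity
  have hμs : 0 < μ - s := by nlinarith
  have hμt : 0 < μ - t := by linarith
  have hb : 1 + (2 * n + 1 : ℝ) * (t - 1) ≤ t ^ (2 * n + 1) := by
    have := one_add_mul_le_pow (a := t - 1) (by linarith) (2 * n + 1)
    simpa using this
  have h2 : (μ - t) * (1 + (2 * n + 1 : ℝ) * (t - 1)) ≤ (μ - t) * t ^ (2 * n + 1) :=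
    mul_le_mul_of_nonneg_left hb (le_of_lt hμt)
  have h3 : (2 * n + 1 : ℝ) * (μ - s) ≤ (2 * n + 1 : ℝ) * (μ - t) :=
    mul_le_mul_of_nonneg_left (by linarith) (le_of_lt hn0)
  have h4 : 0 < (t - 1) * ((2 * n + 1 : ℝ) * (μ - s) - (μ + 1)) := by
    apply mul_pos <;> linarith
  have h5 : (t - 1) * ((2 * n + 1 : ℝ) * (μ - s) - (μ + 1)) ≤
      (t - 1) * ((2 * n + 1 : ℝ) * (μ - t) - (μ + 1)) :=
    mul_le_mul_of_nonneg_left (by linarith) (by linarith)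
  unfold Gf
  nlinarith

lemma sOne_lt (μ : ℝ) (hμ : 1 < μ) (n : ℕ) (hn : (n : ℝ) + 1 < n * μ) :
    1 < (n : ℝ) * μ / (n + 1) ∧ (n : ℝ) * μ / (n + 1) < μ ∧
      μ + 1 < (2 * n + 1 : ℝ) * (μ - (n : ℝ) * μ / (n + 1)) := by
  have hn1 : (0:ℝ) < (n:ℝ) + 1 := by positivity
  refine ⟨by rw [lt_div_iff₀ hn1]; linarith, by rw [div_lt_iff₀ hn1]; nlinarith, ?_⟩
  have : μ - (n : ℝ) * μ / (n + 1) = μ / (n + 1) := by field_simp; ring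
  rw [this, ← mul_div_assoc, lt_div_iff₀ hn1]
  have hn0 : (0:ℝ) ≤ n := Nat.cast_nonneg n
  nlinarith

lemma G1_anti (μ : ℝ) (hμ : 1 < μ) (n : ℕ) (hn : (n : ℝ) + 1 < n * μ) :
    StrictAntiOn (G1 μ n) (Icc ((n : ℝ) * μ / (n + 1)) μ) := by
  obtain ⟨m, rfl⟩ : ∃ m, n = m + 1 := by
    refine ⟨n - 1, ?_⟩
    rcases Nat.eq_zero_or_pos n with h | h
    · exfalso; rw [h] at hn; norm_num at hn
    · omega
  set s₁ := ((m + 1 : ℕ) : ℝ) * μ / ((m + 1 : ℕ) + 1) with hs₁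
  apply strictAntiOn_of_deriv_neg (convex_Icc _ _)
  · exact Continuous.continuousOn (by
      have : Continuous (G1 μ (m + 1)) := by unfold G1; continuity
      exact this)
  · intro x hx
    rw [interior_Icc] at hx
    rw [(hasDerivAt_G1 μ m x).deriv]
    have hx1 : s₁ < x := hx.1
    have hs1pos : (1:ℝ) ≤ s₁ := by
      have hn1 : (0:ℝ) < ((m:ℝ) + 1) + 1 := by positivity
      rw [hs₁]; push_cast
      rw [le_div_iff₀ hn1]
      push_cast at hn; nlinarith
    have hxpos : 0 < x := by linarith
    have hneg : ((m:ℝ) + 1) * μ - ((m:ℝ) + 2) * x < 0 := by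
      have hcalc : ((m:ℝ) + 1) * μ = s₁ * ((m:ℝ) + 2) := by
        rw [hs₁]; push_cast; field_simp; ring
      have hmul : s₁ * ((m:ℝ) + 2) < x * ((m:ℝ) + 2) :=
        mul_lt_mul_of_pos_right hx1 (by positivity)
      nlinarith
    have : (0:ℝ) < 2 * (2 * (m:ℝ) + 3) * x ^ (2 * m + 1) := by positivity
    nlinarith

lemma stayNeg (μ : ℝ) (hμ : 1 < μ) (n : ℕ) (hn : (n : ℝ) + 1 < n * μ) (t₁ t₂ : ℝ)
    (h11 : 1 < t₁) (h12 : t₁ < t₂) (h2μ : t₂ ≤ μ) (hG : Gf μ n t₁ ≤ 0) : Gf μ n t₂ < 0 := by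
  set s₁ := (n : ℝ) * μ / (n + 1) with hs₁
  obtain ⟨hs1, hsμ, hc⟩ := sOne_lt μ hμ n hn
  have hGs1 : 0 < Gf μ n s₁ := Gpos μ hμ n s₁ s₁ hs1 le_rfl hc
  have hst1 : s₁ < t₁ := by
    by_contra h
    push_neg at h
    exact absurd (Gpos μ hμ n s₁ t₁ h11 h hc) (by linarith)
  obtain ⟨c, hc1, hc2⟩ := exists_hasDerivAt_eq_slope (Gf μ n) (G1 μ n) hst1
    ((Gf_cont μ n).continuousOn) (fun x _ => hasDerivAt_Gf μ n x)
  have hslope : G1 μ n c < 0 := by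
    rw [hc2]
    apply div_neg_of_neg_of_pos <;> linarith
  have hanti := G1_anti μ hμ n hn
  have hkey : ∀ x ∈ Ioo t₁ t₂, G1 μ n x < 0 := by
    intro x hx
    have hcx : G1 μ n x < G1 μ n c := by
      apply hanti ⟨le_of_lt hc1.1, by linarith [hc1.2]⟩
        ⟨by linarith [hc1.1, hc1.2, hx.1], by linarith [hx.2]⟩
      linarith [hc1.2, hx.1]
    linarith
  have hGanti : StrictAntiOn (Gf μ n) (Icc t₁ t₂) := by
    apply strictAntiOn_of_deriv_neg (convex_Icc _ _) ((Gf_cont μ n).continuousOn)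
    intro x hx
    rw [interior_Icc] at hx
    rw [(hasDerivAt_Gf μ n x).deriv]
    exact hkey x hx
  have := hGanti ⟨le_rfl, le_of_lt h12⟩ ⟨le_of_lt h12, le_rfl⟩ h12
  linarith

lemma exZero (μ : ℝ) (hμ : 1 < μ) (n : ℕ) (hn : (n : ℝ) + 1 < n * μ) :
    ∃ t, (n : ℝ) * μ / (n + 1) < t ∧ t < μ ∧ Gf μ n t = 0 := by
  obtain ⟨hs1, hsμ, hc⟩ := sOne_lt μ hμ n hn
  have hGs1 : 0 < Gf μ n ((n : ℝ) * μ / (n + 1)) := Gpos μ hμ n _ _ hs1 le_rfl hc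
  have hGμ : Gf μ n μ < 0 := by
    simp only [Gf, sub_self, zero_mul, zero_add]
    nlinarith
  have h0 : (0:ℝ) ∈ Ioo (Gf μ n μ) (Gf μ n ((n : ℝ) * μ / (n + 1))) := ⟨hGμ, hGs1⟩
  have := intermediate_value_Ioo' (le_of_lt hsμ) ((Gf_cont μ n).continuousOn) h0
  obtain ⟨t, ht, htv⟩ := this
  exact ⟨t, ht.1, ht.2, htv⟩

lemma uniqZero (μ : ℝ) (hμ : 1 < μ) (n : ℕ) (hn : (n : ℝ) + 1 < n * μ) (t t' : ℝ)
    (h : 1 < t ∧ t < μ ∧ Gf μ n t = 0) (h' : 1 < t' ∧ t' < μ ∧ Gf μ n t' = 0) : t = t' := by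
  rcases lt_trichotomy t t' with hlt | heq | hgt
  · exact absurd (stayNeg μ hμ n hn t t' h.1 hlt (le_of_lt h'.2.1) (le_of_eq h.2.2))
      (by rw [h'.2.2]; exact lt_irrefl 0)
  · exact heq
  · exact absurd (stayNeg μ hμ n hn t' t h'.1 hgt (le_of_lt h.2.1) (le_of_eq h'.2.2))
      (by rw [h.2.2]; exact lt_irrefl 0)

open Classical in
noncomputable def tseq (μ : ℝ) (n : ℕ) : ℝ :=
  if h : ∃ t, 1 < t ∧ t < μ ∧ Gf μ n t = 0 then h.choose else 2

lemma tseq_spec {μ : ℝ} {n : ℕ} (h : ∃ t, 1 < t ∧ t < μ ∧ Gf μ n t = 0) :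
    1 < tseq μ n ∧ tseq μ n < μ ∧ Gf μ n (tseq μ n) = 0 := by
  classical
  rw [tseq]
  rw [dif_pos h]
  exact h.choose_spec

noncomputable def xseq (μ : ℝ) (n : ℕ) : ℝ := μ / 2 - tseq μ n - 1 / tseq μ n

lemma param (s : ℝ) (hs : 2 < s) : ∃ t : ℝ, 1 < t ∧ t + 1 / t = s := by
  have hsq : 0 ≤ s ^ 2 - 4 := by nlinarith
  set r := Real.sqrt (s ^ 2 - 4) with hr
  have hrnn : 0 ≤ r := Real.sqrt_nonneg _
  have hrsq : r ^ 2 = s ^ 2 - 4 := Real.sq_sqrt hsq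
  refine ⟨(s + r) / 2, by linarith, ?_⟩
  have ht0 : (s + r) / 2 ≠ 0 := by positivity
  field_simp
  nlinarith [hrsq]

lemma tmono (t u : ℝ) (ht : 1 ≤ t) (hu : 1 ≤ u) (htu : t ≤ u) : t + 1 / t ≤ u + 1 / u := by
  have h1 : (0:ℝ) < t * u := by nlinarith
  have key_s19 : u + 1 / u - (t + 1 / t) = (u - t) * (t * u - 1) / (t * u) := by
    field_simp; ring
  have : 0 ≤ (u - t) * (t * u - 1) / (t * u) :=
    div_nonneg (mul_nonneg (by linarith) (by nlinarith)) (le_of_lt h1)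
  linarith

lemma tseq_facts (μ : ℝ) (hμ : 1 < μ) (n : ℕ) (hn : (n : ℝ) + 1 < n * μ) :
    (n : ℝ) * μ / (n + 1) < tseq μ n ∧ tseq μ n < μ ∧ 1 < tseq μ n ∧
      Gf μ n (tseq μ n) = 0 := by
  obtain ⟨hs1, hsμ, hc⟩ := sOne_lt μ hμ n hn
  obtain ⟨t, ht1, ht2, ht3⟩ := exZero μ hμ n hn
  have hex : ∃ t, 1 < t ∧ t < μ ∧ Gf μ n t = 0 := ⟨t, by linarith, ht2, ht3⟩
  obtain ⟨h1, h2, h3⟩ := tseq_spec hex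
  refine ⟨?_, h2, h1, h3⟩
  by_contra h
  push_neg at h
  exact absurd (Gpos μ hμ n _ _ h1 h hc) (by rw [h3]; exact lt_irrefl 0)

lemma Pzero_xseq (μ : ℝ) (hμ : 1 < μ) (n : ℕ) (hn : (n : ℝ) + 1 < n * μ) :
    Ppoly μ n (xseq μ n) = 0 := by
  obtain ⟨_, hτμ, hτ1, hG⟩ := tseq_facts μ hμ n hn
  set τ := tseq μ n
  have hτ0 : τ ≠ 0 := by positivity
  have hτsq : τ ^ 2 - 1 ≠ 0 := by nlinarith
  have hk := key_s19 μ τ hτ0 hτsq n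
  rw [hG, mul_zero] at hk
  have hne : τ ^ n * (τ ^ 2 - 1) ≠ 0 := mul_ne_zero (pow_ne_zero _ hτ0) hτsq
  have := mul_eq_zero.mp hk
  rcases this with h | h
  · exact h
  · exact absurd h hne

lemma Gneg_of_ge (μ : ℝ) (hμ : 1 < μ) (n : ℕ) (t : ℝ) (ht : μ ≤ t) : Gf μ n t < 0 := by
  have hp : (0:ℝ) < t ^ (2 * n + 1) := pow_pos (by linarith) _
  have h1 : 0 ≤ (t - μ) * t ^ (2 * n + 1) :=
    mul_nonneg (by linarith) (le_of_lt hp)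
  unfold Gf
  nlinarith

lemma zero_left (μ : ℝ) (hμ : 1 < μ) (n : ℕ) (hn : (n : ℝ) + 1 < n * μ) (y : ℝ)
    (hy : y < μ / 2 - 2) (hPy : Ppoly μ n y = 0) : y = xseq μ n := by
  obtain ⟨t, ht1, hts⟩ := param (μ / 2 - y) (by linarith)
  have hyeq : y = μ / 2 - t - 1 / t := by linarith
  have ht0 : t ≠ 0 := by positivity
  have htsq : t ^ 2 - 1 ≠ 0 := by nlinarith
  have hk := key_s19 μ t ht0 htsq n
  rw [← hyeq, hPy, zero_mul] at hk
  have hGt : Gf μ n t = 0 := by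
    have hne : ((-1:ℝ)) ^ (n + 1) ≠ 0 := pow_ne_zero _ (by norm_num)
    rcases mul_eq_zero.mp hk.symm with h | h
    · exact absurd h hne
    · exact h
  have htμ : t < μ := by
    by_contra h
    push_neg at h
    exact absurd hGt (ne_of_lt (Gneg_of_ge μ hμ n t h))
  obtain ⟨_, hτμ, hτ1, hG⟩ := tseq_facts μ hμ n hn
  have := uniqZero μ hμ n hn t (tseq μ n) ⟨ht1, htμ, hGt⟩ ⟨hτ1, hτμ, hG⟩
  rw [hyeq, this]; rfl

lemma dist_eq (μ : ℝ) (hμ : 1 < μ) (n : ℕ) (hn : (n : ℝ) + 1 < n * μ) :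
    xseq μ n - (-μ / 2 - 1 / μ) =
      (μ - tseq μ n) * (μ * tseq μ n - 1) / (μ * tseq μ n) := by
  obtain ⟨_, hτμ, hτ1, _⟩ := tseq_facts μ hμ n hn
  have hτ0 : tseq μ n ≠ 0 := by positivity
  have hμ0 : μ ≠ 0 := by positivity
  unfold xseq
  field_simp
  ring

theorem extreme_zero_asymptotics (μ : ℝ) (hμ : 1 < μ) :
    ∃ N : ℕ, ∃ x : ℕ → ℝ,
      (∀ n, N ≤ n →
        (Ppoly μ n (x n) = 0 ∧
          (∀ y : ℝ, Ppoly μ n y = 0 →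
            |x n - (-μ / 2 - 1 / μ)| ≤ |y - (-μ / 2 - 1 / μ)|) ∧
          (∀ y : ℝ, Ppoly μ n y = 0 →
            |y - (-μ / 2 - 1 / μ)| ≤ |x n - (-μ / 2 - 1 / μ)| → y = x n))) ∧
      Tendsto (fun n : ℕ => |x n - (-μ / 2 - 1 / μ)| ^ (1 / (n : ℝ)))
        atTop (𝓝 (1 / μ ^ 2)) := by
  have hμ0 : (0:ℝ) < μ := by linarith
  have hD : 0 < μ + 1/μ - 2 := by
    have h1 : 0 < (μ-1)^2 / μ := div_pos (pow_pos (by linarith) 2) hμ0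
    have h2 : μ + 1/μ - 2 = (μ-1)^2/μ := by field_simp; ring
    linarith
  have hev : ∀ᶠ n : ℕ in atTop,
      ((n:ℝ) + 1 < n * μ ∧ μ / ((n:ℝ)+1) < μ + 1/μ - 2 ∧ 1 ≤ n) := by
    have hc1 : ∀ᶠ n : ℕ in atTop, (2:ℝ)/(μ-1) < (n:ℝ) :=
      tendsto_natCast_atTop_atTop.eventually_gt_atTop _
    have hc2 : ∀ᶠ n : ℕ in atTop, μ/(μ+1/μ-2) < (n:ℝ) :=
      tendsto_natCast_atTop_atTop.eventually_gt_atTop _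
    have hc3 : ∀ᶠ n : ℕ in atTop, 1 ≤ n := eventually_ge_atTop 1
    filter_upwards [hc1, hc2, hc3] with n h1 h2 h3
    refine ⟨?_, ?_, h3⟩
    · have := (div_lt_iff₀ (by linarith : (0:ℝ) < μ - 1)).mp h1
      nlinarith
    · have := (div_lt_iff₀ hD).mp h2
      rw [div_lt_iff₀ (by positivity : (0:ℝ) < (n:ℝ)+1)]
      nlinarith
  obtain ⟨N, hN⟩ := eventually_atTop.mp hev
  refine ⟨N, xseq μ, ?_, ?_⟩
  · intro n hn
    obtain ⟨hcond, hDn, hn1⟩ := hN n hn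
    obtain ⟨hτlow, hτμ, hτ1, hG⟩ := tseq_facts μ hμ n hcond
    have hd := dist_eq μ hμ n hcond
    set τ := tseq μ n with hτdef
    have hτ0 : (0:ℝ) < τ := by linarith
    have hμτ1 : 0 < μ * τ - 1 := by nlinarith
    have hapos : 0 < xseq μ n - (-μ / 2 - 1 / μ) := by
      rw [hd]
      exact div_pos (mul_pos (by linarith) hμτ1) (by positivity)
    have habs : |xseq μ n - (-μ / 2 - 1 / μ)| = xseq μ n - (-μ / 2 - 1 / μ) :=
      abs_of_pos hapos
    have hlt1 : xseq μ n - (-μ / 2 - 1 / μ) < μ - τ := by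
      rw [hd, div_lt_iff₀ (by positivity : (0:ℝ) < μ * τ)]
      nlinarith
    have hμsub : μ - τ < μ/((n:ℝ)+1) := by
      have he : μ - (n:ℝ)*μ/((n:ℝ)+1) = μ/((n:ℝ)+1) := by
        have : ((n:ℝ)+1) ≠ 0 := by positivity
        field_simp; ring
      linarith [hτlow]
    have hsmall : xseq μ n - (-μ / 2 - 1 / μ) < μ + 1/μ - 2 := by linarith
    refine ⟨Pzero_xseq μ hμ n hcond, ?_, ?_⟩
    · intro y hy
      by_cases hyl : y < μ/2 - 2
      · rw [zero_left μ hμ n hcond y hyl hy]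
      · push_neg at hyl
        have h1 : μ + 1/μ - 2 ≤ y - (-μ / 2 - 1 / μ) := by linarith
        have h2 : y - (-μ / 2 - 1 / μ) ≤ |y - (-μ / 2 - 1 / μ)| := le_abs_self _
        rw [habs]; linarith
    · intro y hy hcl
      by_cases hyl : y < μ/2 - 2
      · exact zero_left μ hμ n hcond y hyl hy
      · exfalso
        push_neg at hyl
        have h1 : μ + 1/μ - 2 ≤ y - (-μ / 2 - 1 / μ) := by linarith
        have h2 : y - (-μ / 2 - 1 / μ) ≤ |y - (-μ / 2 - 1 / μ)| := le_abs_self _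
        rw [habs] at hcl
        linarith
  · -- the limit
    have hτten : Tendsto (fun n => tseq μ n) atTop (𝓝 μ) := by
      have h0 : Tendsto (fun n:ℕ => μ - μ * (1/((n:ℝ)+1))) atTop (𝓝 (μ - μ*0)) :=
        tendsto_const_nhds.sub (tendsto_const_nhds.mul tendsto_one_div_add_atTop_nhds_zero_nat)
      have hlo : Tendsto (fun n:ℕ => (n:ℝ)*μ/((n:ℝ)+1)) atTop (𝓝 μ) := by
        have he : (fun n:ℕ => (n:ℝ)*μ/((n:ℝ)+1)) = fun n:ℕ => μ - μ*(1/((n:ℝ)+1)) := by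
          funext n
          have : ((n:ℝ)+1) ≠ 0 := by positivity
          field_simp; ring
        rw [he]; simpa using h0
      apply tendsto_of_tendsto_of_tendsto_of_le_of_le' hlo tendsto_const_nhds
      · filter_upwards [hev] with n hc
        exact le_of_lt (tseq_facts μ hμ n hc.1).1
      · filter_upwards [hev] with n hc
        exact le_of_lt (tseq_facts μ hμ n hc.1).2.1
    have hlogτ : Tendsto (fun n => Real.log (tseq μ n)) atTop (𝓝 (Real.log μ)) :=
      hτten.log (by positivity)
    have hμμ1 : (0:ℝ) < μ*μ - 1 := by nlinarith
    have hmulten : Tendsto (fun n => μ * tseq μ n - 1) atTop (𝓝 (μ*μ - 1)) := by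
      have := (tendsto_const_nhds (x := μ)).mul hτten
      simpa using this.sub (tendsto_const_nhds (x := (1:ℝ)))
    have hlog1 : Tendsto (fun n => Real.log (μ * tseq μ n - 1)) atTop (𝓝 (Real.log (μ*μ-1))) :=
      hmulten.log (ne_of_gt hμμ1)
    have hinv : Tendsto (fun n:ℕ => 1/(n:ℝ)) atTop (𝓝 0) := tendsto_one_div_atTop_nhds_zero_nat
    have hF : Tendsto (fun n:ℕ => (2*Real.log (μ * tseq μ n - 1) - Real.log μ) * (1/(n:ℝ))
        - (2 + 2*(1/(n:ℝ))) * Real.log (tseq μ n)) atTop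
        (𝓝 ((2*Real.log (μ*μ-1) - Real.log μ) * 0 - (2 + 2*0) * Real.log μ)) :=
      Tendsto.sub
        (Tendsto.mul ((tendsto_const_nhds.mul hlog1).sub tendsto_const_nhds) hinv)
        (Tendsto.mul (tendsto_const_nhds.add (tendsto_const_nhds.mul hinv)) hlogτ)
    have hval : Real.exp ((2*Real.log (μ*μ-1) - Real.log μ) * 0 - (2 + 2*0) * Real.log μ)
        = 1/μ^2 := by
      rw [mul_zero, zero_sub, mul_zero, add_zero]
      rw [show (2:ℝ) * Real.log μ = Real.log (μ^2) by rw [Real.log_pow]; norm_num]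
      rw [Real.exp_neg, Real.exp_log (by positivity)]
      rw [one_div]
    have hexp : Tendsto (fun n:ℕ => Real.exp ((2*Real.log (μ * tseq μ n - 1) - Real.log μ) * (1/(n:ℝ))
        - (2 + 2*(1/(n:ℝ))) * Real.log (tseq μ n))) atTop (𝓝 (1/μ^2)) := by
      have := (Real.continuous_exp.tendsto _).comp hF
      rwa [hval] at this
    apply Tendsto.congr' ?_ hexp
    filter_upwards [hev] with n hc
    obtain ⟨hcond, _, hn1⟩ := hc
    obtain ⟨hτlow, hτμ, hτ1, hG⟩ := tseq_facts μ hμ n hcond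
    have hd := dist_eq μ hμ n hcond
    set τ := tseq μ n with hτdef
    have hτ0 : (0:ℝ) < τ := by linarith
    have hμτ1 : (0:ℝ) < μ*τ - 1 := by nlinarith
    have hGe : (μ - τ) * τ^(2*n+1) = μ*τ - 1 := by
      unfold Gf at hG; linarith
    have hform : xseq μ n - (-μ / 2 - 1 / μ) = (μ*τ-1)^2 / (μ * τ^(2*n+2)) := by
      rw [hd, div_eq_div_iff (by positivity) (by positivity)]
      linear_combination ((μ*τ-1)*μ*τ) * hGe
    have hpos : (0:ℝ) < xseq μ n - (-μ / 2 - 1 / μ) := by rw [hform]; positivity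
    have habs : |xseq μ n - (-μ / 2 - 1 / μ)| = xseq μ n - (-μ / 2 - 1 / μ) := abs_of_pos hpos
    rw [habs, hform, Real.rpow_def_of_pos (by rw [← hform]; exact hpos)]
    rw [Real.log_div (by positivity) (by positivity),
        Real.log_mul (ne_of_gt hμ0) (by positivity),
        Real.log_pow, Real.log_pow]
    have hn0 : (n:ℝ) ≠ 0 := by
      have : (1:ℝ) ≤ (n:ℝ) := by exact_mod_cast hn1
      linarith
    push_cast
    field_simp
    ring
end
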